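/- Let c > 0, let r > 0, let t ∈ ℝ, and let λ : ℝ → ℝ be continuous with compact support. Then the function τ ↦ λ(τ) / (2π √((t − τ)² − c⁻²r²)) is integrable on the interval (−∞, t − c⁻¹r), and consequently the time convolution of the two-dimensional Green's function with λ, (G₂(x,·;y) ∗ λ)(t) = ∫_ℝ H(t − τ − c⁻¹‖x − y‖) λ(τ) / (2π √((t − τ)² − c⁻²‖x − y‖²)) dτ with r = ‖x − y‖, is well defined and equals ∫_{−∞}^{t − c⁻¹r} λ(τ) / (2π √((t − τ)² − c⁻²r²)) dτ. -/
import Mathlib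


open MeasureTheory Real

/-- The Heaviside function: `H(t) = 1` for `t > 0` and `H(t) = 0` for `t ≤ 0`. -/
noncomputable def heaviside (t : ℝ) : ℝ := if 0 < t then 1 else 0

/-- for a continuous, compactly supported signal `λ`, the kernel
`τ ↦ λ(τ)/(2π√((t − τ)² − c⁻²r²))` is integrable on `(−∞, t − c⁻¹r)`, and the time
convolution of the 2D Green's function with `λ` is well defined and equals
`∫_{−∞}^{t − c⁻¹r} λ(τ)/(2π√((t − τ)² − c⁻²r²)) dτ`. -/
theorem stmt_10 (c : ℝ) (hc : 0 < c) (r : ℝ) (hr : 0 < r) (t : ℝ)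
    (lam : ℝ → ℝ) (hcont : Continuous lam) (hsupp : HasCompactSupport lam) :
    IntegrableOn (fun τ => lam τ / (2 * Real.pi * Real.sqrt ((t - τ) ^ 2 - c⁻¹ ^ 2 * r ^ 2)))
        (Set.Iio (t - c⁻¹ * r)) ∧
      Integrable (fun τ => heaviside (t - τ - c⁻¹ * r) *
          (lam τ / (2 * Real.pi * Real.sqrt ((t - τ) ^ 2 - c⁻¹ ^ 2 * r ^ 2)))) ∧
      (∫ τ : ℝ, heaviside (t - τ - c⁻¹ * r) *
          (lam τ / (2 * Real.pi * Real.sqrt ((t - τ) ^ 2 - c⁻¹ ^ 2 * r ^ 2)))) =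
        ∫ τ in Set.Iio (t - c⁻¹ * r),
          lam τ / (2 * Real.pi * Real.sqrt ((t - τ) ^ 2 - c⁻¹ ^ 2 * r ^ 2)) := by
  set a : ℝ := c⁻¹ * r with ha_def
  have ha : 0 < a := mul_pos (inv_pos.2 hc) hr
  set s : ℝ := t - a with hs_def
  set g : ℝ → ℝ := fun τ => lam τ / (2 * Real.pi * Real.sqrt ((t - τ) ^ 2 - c⁻¹ ^ 2 * r ^ 2))
    with hg_def
  have ha2 : c⁻¹ ^ 2 * r ^ 2 = a ^ 2 := by rw [ha_def]; ring
  -- measurability of g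
  have hgmeas : Measurable g := by
    apply hcont.measurable.div
    exact ((continuous_const.mul (Real.continuous_sqrt.comp (by fun_prop))) : Continuous
      fun τ : ℝ => 2 * Real.pi * Real.sqrt ((t - τ) ^ 2 - c⁻¹ ^ 2 * r ^ 2)).measurable
  -- bound on lam
  obtain ⟨M, hM⟩ := hsupp.exists_bound_of_continuous hcont
  -- support of lam inside a closed ball
  obtain ⟨R, hR⟩ := hsupp.isCompact.isBounded.subset_closedBall 0
  set b : ℝ := min (s - 1) (-R - 1) with hb_def
  have hbs : b ≤ s := le_trans (min_le_left _ _) (by linarith)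
  -- g vanishes on Iio b
  have hzero : ∀ τ ∈ Set.Iio b, g τ = 0 := by
    intro τ hτ
    have hτR : τ ∉ tsupport lam := by
      intro hmem
      have := hR hmem
      rw [Real.closedBall_eq_Icc] at this
      have h1 : b ≤ -R - 1 := min_le_right _ _
      simp only [zero_sub, zero_add, Set.mem_Icc] at this
      have : -R ≤ τ := this.1
      have : τ < -R - 1 := lt_of_lt_of_le hτ h1
      linarith
    have : lam τ = 0 := image_eq_zero_of_notMem_tsupport hτR
    simp [hg_def, this]
  -- majorant constant
  set C : ℝ := M / (2 * Real.pi * Real.sqrt (2 * a)) with hC_def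
  -- the pointwise bound on Ico b s
  have hbound : ∀ τ ∈ Set.Ico b s, ‖g τ‖ ≤ C * (s - τ) ^ (-(1/2) : ℝ) := by
    intro τ hτ
    have hst : 0 < s - τ := sub_pos.2 hτ.2
    have hMnn : 0 ≤ M := le_trans (norm_nonneg _) (hM 0)
    have hfact : (t - τ) ^ 2 - c⁻¹ ^ 2 * r ^ 2 = (s - τ) * ((s - τ) + 2 * a) := by
      rw [ha2, hs_def]; ring
    have hge : 2 * a * (s - τ) ≤ (t - τ) ^ 2 - c⁻¹ ^ 2 * r ^ 2 := by
      rw [hfact]; nlinarith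
    have hsq : Real.sqrt (2 * a) * Real.sqrt (s - τ)
        ≤ Real.sqrt ((t - τ) ^ 2 - c⁻¹ ^ 2 * r ^ 2) := by
      rw [← Real.sqrt_mul (by positivity)]
      exact Real.sqrt_le_sqrt hge
    have hden_pos : 0 < 2 * Real.pi * (Real.sqrt (2 * a) * Real.sqrt (s - τ)) := by
      have := Real.pi_pos; positivity
    have hden_le : 2 * Real.pi * (Real.sqrt (2 * a) * Real.sqrt (s - τ))
        ≤ 2 * Real.pi * Real.sqrt ((t - τ) ^ 2 - c⁻¹ ^ 2 * r ^ 2) := by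
      have := Real.pi_pos
      exact mul_le_mul_of_nonneg_left hsq (by positivity)
    have h1 : ‖g τ‖ ≤ M / (2 * Real.pi * (Real.sqrt (2 * a) * Real.sqrt (s - τ))) := by
      rw [hg_def]
      simp only [norm_div, Real.norm_eq_abs]
      have habs : |2 * Real.pi * Real.sqrt ((t - τ) ^ 2 - c⁻¹ ^ 2 * r ^ 2)|
          = 2 * Real.pi * Real.sqrt ((t - τ) ^ 2 - c⁻¹ ^ 2 * r ^ 2) := by
        have := Real.pi_pos; have := Real.sqrt_nonneg ((t - τ) ^ 2 - c⁻¹ ^ 2 * r ^ 2)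
        rw [abs_of_nonneg]; positivity
      rw [habs]
      apply div_le_div₀ (by exact hMnn) _ hden_pos hden_le
      calc |lam τ| = ‖lam τ‖ := rfl
        _ ≤ M := hM τ
    calc ‖g τ‖ ≤ M / (2 * Real.pi * (Real.sqrt (2 * a) * Real.sqrt (s - τ))) := h1
      _ = C * (s - τ) ^ (-(1/2) : ℝ) := by
          have hs2 : Real.sqrt (s - τ) ≠ 0 := by positivity
          have hsa : Real.sqrt (2 * a) ≠ 0 := by positivity
          have hpi : Real.pi ≠ 0 := Real.pi_ne_zero
          rw [hC_def, Real.rpow_neg hst.le, ← Real.sqrt_eq_rpow]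
          field_simp
          try ring
          try simp
  -- integrability of the majorant on Ico b s
  have hmaj : IntegrableOn (fun τ => C * (s - τ) ^ (-(1/2) : ℝ)) (Set.Ico b s) := by
    have h1 : IntervalIntegrable (fun x : ℝ => x ^ (-(1/2) : ℝ)) volume 0 (s - b) :=
      intervalIntegral.intervalIntegrable_rpow' (by norm_num)
    have h2 : IntervalIntegrable (fun x : ℝ => (s - x) ^ (-(1/2) : ℝ)) volume (s - (s - b))
        (s - 0) := (h1.comp_sub_left s).symm
    simp only [sub_sub_cancel, sub_zero] at h2
    have h3 : IntegrableOn (fun x : ℝ => (s - x) ^ (-(1/2) : ℝ)) (Set.Ico b s) :=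
      (intervalIntegrable_iff_integrableOn_Ico_of_le hbs).1 h2
    exact h3.const_mul C
  -- integrability of g on Ico b s
  have hIco : IntegrableOn g (Set.Ico b s) := by
    refine Integrable.mono' hmaj (hgmeas.aestronglyMeasurable.restrict) ?_
    filter_upwards [ae_restrict_mem measurableSet_Ico] with τ hτ using hbound τ hτ
  -- integrability of g on Iio b (it vanishes there)
  have hIiob : IntegrableOn g (Set.Iio b) := by
    refine (integrableOn_congr_fun (fun τ hτ => (hzero τ hτ).symm) measurableSet_Iio).1 ?_
    exact integrableOn_zero
  -- first conclusion
  have h_int : IntegrableOn g (Set.Iio s) := by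
    rw [← Set.Iio_union_Ico_eq_Iio hbs]
    exact hIiob.union hIco
  -- rewrite the heaviside integrand as an indicator
  have hind : (fun τ => heaviside (t - τ - c⁻¹ * r) * g τ) = (Set.Iio s).indicator g := by
    funext τ
    by_cases h : τ < s
    · have hpos : 0 < t - τ - c⁻¹ * r := by rw [← ha_def]; simp only [hs_def] at h; linarith
      simp only [Set.indicator_apply, Set.mem_Iio, if_pos h, heaviside, if_pos hpos, one_mul]
    · have hnpos : ¬ (0 < t - τ - c⁻¹ * r) := by
        rw [← ha_def]; simp only [hs_def, not_lt] at h ⊢; linarith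
      simp only [Set.indicator_apply, Set.mem_Iio, if_neg h, heaviside, if_neg hnpos, zero_mul]
  refine ⟨h_int, ?_, ?_⟩
  · show Integrable (fun τ => heaviside (t - τ - c⁻¹ * r) * g τ)
    rw [hind]
    exact (integrable_indicator_iff measurableSet_Iio).2 h_int
  · show (∫ τ, heaviside (t - τ - c⁻¹ * r) * g τ) = ∫ τ in Set.Iio s, g τ
    rw [hind]
    exact integral_indicator measurableSet_Iio
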